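/- Fix an index i and an index j with 1 ≤ i, j ≤ N. The partial derivative of the i-th pooling score with respect to the adjacency entry a_{ij} (all other entries of A and all of H, d held fixed) satisfies: the derivative at t = 0 of the map t ↦ S(A + t·E_{ij}, H)_i, where E_{ij} is the matrix with 1 in position (i,j) and 0 elsewhere, equals d_i · d_j · ((Ď_{row j} ∘ A_{row j}) · (H W θ)) + a_{ii} · d_i³ · d_j · (H_{row j} · (W θ)). Equivalently, ∂(S(A₀,H₀)_i − S(A,H)_i)/∂a_{ij} = −θᵀ[ d_i d_j (K H W)ᵀ + M ], where K = Ď_{row j} ∘ A_{row j} ∈ ℝ^{1×N} and M = a_{ii} d_i² (d_i d_j H_{row j} W)ᵀ ∈ ℝ^{F×1}, the term S(A₀,H₀)_i being a constant independent of a_{ij}. -/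

import Mathlib

open Matrix BigOperators

/-- Hadamard-weighted adjacency `Ď ∘ A`, where `Ď k l = d k * d l`. -/
noncomputable def DhadA {N : ℕ} (d : Fin N → ℝ) (A : Matrix (Fin N) (Fin N) ℝ) :
    Matrix (Fin N) (Fin N) ℝ :=
  Matrix.of fun k l => d k * d l * A k l

/-- Pooling score vector `S(A,H) = (Ď∘A)((Ď∘A) H W) θ` of the surrogate model. -/
noncomputable def poolScore {N D F : ℕ} (d : Fin N → ℝ)
    (A : Matrix (Fin N) (Fin N) ℝ) (H : Matrix (Fin N) (Fin D) ℝ)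
    (W : Matrix (Fin D) (Fin F) ℝ) (θ : Fin F → ℝ) : Fin N → ℝ :=
  (DhadA d A).mulVec (((DhadA d A) * H * W).mulVec θ)

/-- Theorem 1 of the paper (single-entry form): the derivative of the i-th pooling
score with respect to the adjacency entry `a_{ij}` equals
`d_i d_j ((Ď_{row j} ∘ A_{row j}) · (H W θ)) + a_{ii} d_i³ d_j (H_{row j} · (W θ))`. -/
theorem deriv_poolScore_adj_entry {N D F : ℕ} (hN : 0 < N) (hD : 0 < D) (hF : 0 < F)
    (d : Fin N → ℝ) (A : Matrix (Fin N) (Fin N) ℝ)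
    (H : Matrix (Fin N) (Fin D) ℝ) (W : Matrix (Fin D) (Fin F) ℝ)
    (θ : Fin F → ℝ) (i j : Fin N) :
    deriv (fun t : ℝ =>
        poolScore d (A + t • Matrix.single i j (1 : ℝ)) H W θ i) 0 =
      d i * d j * (∑ k, (d j * d k * A j k) * ((H * W).mulVec θ) k)
        + A i i * (d i) ^ 3 * d j * ((H * W).mulVec θ) j := by
  have hf : (fun t : ℝ => poolScore d (A + t • Matrix.single i j (1 : ℝ)) H W θ i)
      = fun t : ℝ =>
        ∑ k, (d i * d k * (A i k + t * (if j = k then (1:ℝ) else 0))) *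
          (∑ m, (∑ l, (d k * d l * (A k l + t * (if i = k ∧ j = l then (1:ℝ) else 0))) * (H*W) l m) * θ m) := by
    funext t
    simp only [poolScore, Matrix.mul_assoc]
    simp [DhadA, Matrix.mulVec, Matrix.mul_apply, dotProduct,
      Matrix.add_apply, Matrix.smul_apply, smul_eq_mul, Matrix.single,
      mul_ite, mul_one, mul_zero]
  rw [hf]
  have hder : HasDerivAt (fun t : ℝ =>
        ∑ k, (d i * d k * (A i k + t * (if j = k then (1:ℝ) else 0))) *
          (∑ m, (∑ l, (d k * d l * (A k l + t * (if i = k ∧ j = l then (1:ℝ) else 0))) * (H*W) l m) * θ m))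
      (∑ k, ((d i * d k * (if j = k then (1:ℝ) else 0)) *
          (∑ m, (∑ l, (d k * d l * (A k l + 0 * (if i = k ∧ j = l then (1:ℝ) else 0))) * (H*W) l m) * θ m)
        + (d i * d k * (A i k + 0 * (if j = k then (1:ℝ) else 0))) *
          (∑ m, (∑ l, (d k * d l * (if i = k ∧ j = l then (1:ℝ) else 0)) * (H*W) l m) * θ m))) 0 := by
    apply HasDerivAt.fun_sum
    intro k _
    have hu : HasDerivAt (fun t : ℝ => d i * d k * (A i k + t * (if j = k then (1:ℝ) else 0)))
        (d i * d k * (if j = k then (1:ℝ) else 0)) 0 := by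
      simpa using (((hasDerivAt_id (0:ℝ)).mul_const (if j = k then (1:ℝ) else 0)).const_add (A i k)).const_mul (d i * d k)
    have hv : HasDerivAt (fun t : ℝ =>
          ∑ m, (∑ l, (d k * d l * (A k l + t * (if i = k ∧ j = l then (1:ℝ) else 0))) * (H*W) l m) * θ m)
        (∑ m, (∑ l, (d k * d l * (if i = k ∧ j = l then (1:ℝ) else 0)) * (H*W) l m) * θ m) 0 := by
      apply HasDerivAt.fun_sum
      intro m _
      apply HasDerivAt.mul_const
      apply HasDerivAt.fun_sum
      intro l _
      simpa using ((((hasDerivAt_id (0:ℝ)).mul_const (if i = k ∧ j = l then (1:ℝ) else 0)).const_add (A k l)).const_mul (d k * d l)).mul_const ((H*W) l m)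
    simpa using hu.fun_mul hv
  rw [hder.deriv]
  simp only [zero_mul, add_zero, mul_zero, mul_one, ite_self]
  rw [Finset.sum_add_distrib]
  simp only [ite_mul, zero_mul, mul_ite, mul_zero, Finset.sum_ite_eq, Finset.mem_univ, if_true]
  have hcomm : ∀ (x x2 : Fin N) (c : ℝ),
      (if i = x ∧ j = x2 then c else 0) = (if j = x2 then (if i = x then c else 0) else 0) := by
    intro x x2 c; split_ifs <;> tauto
  simp only [hcomm, Finset.sum_ite_eq, Finset.mem_univ, if_true, ite_mul, zero_mul,
    mul_ite, mul_zero, Finset.sum_ite_eq', mul_one]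
  simp only [Finset.sum_ite_irrel, Finset.sum_const_zero, mul_ite, mul_zero,
    Finset.sum_ite_eq, Finset.mem_univ, if_true]
  simp only [Matrix.mulVec, dotProduct]
  congr 1
  · simp only [Finset.mul_sum, Finset.sum_mul]
    rw [Finset.sum_comm]
    apply Finset.sum_congr rfl; intro x _
    apply Finset.sum_congr rfl; intro y _
    ring
  · simp only [Finset.mul_sum]
    apply Finset.sum_congr rfl; intro x _
    ring
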